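/- For each prime n ≥ 3, if G is the graph of Construction 1, then χ_ℓ(G²) − χ(G²) > n² − 6n + 3, where G² is the square of G. -/

import Mathlib

open SimpleGraph

/-- Entry of the Latin square `L_i`:  `L_i(j,k) ≡ j + i·(k-1) (mod n)`, with
indices and entries taken in `ZMod n` (identifying `[n] = {1,…,n}` with `ZMod n`). -/
def latinL (n : ℕ) (i j k : ZMod n) : ZMod n := j + i * (k - 1)

/-- The vertices of the graph `G` of Construction 1:
`pv k m l` is `v_{k,m}^l ∈ P`, `qv i j` is `w_{i,j} ∈ Q` (with `i ≠ 0`, i.e. `i ∈ [n-1]`),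
`rv i j` is `u_{i,j} ∈ R`, and `sv m` is `s_m ∈ S`. -/
inductive Vert (n : ℕ) : Type
  | pv (k m l : ZMod n) : Vert n
  | qv (i : {x : ZMod n // x ≠ 0}) (j : ZMod n) : Vert n
  | rv (i : {x : ZMod n // x ≠ 0}) (j : ZMod n) : Vert n
  | sv (m : ZMod n) : Vert n

/-- One-directional description of the edges of Construction 1:
`w_{i,j}` is adjacent to `v_{k, L_i(j,k)}^l` for all `k, l`;
`u_{i,j}` is adjacent to every vertex of `T_{l, L_i(j,l)}` for every `l`;
`s_m` is adjacent to every vertex of `T_{l,m}` for every `l`. -/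
def rel {n : ℕ} : Vert n → Vert n → Prop
  | .qv i j, .pv k m _ => m = latinL n i.1 j k
  | .rv i j, .pv _ m l => m = latinL n i.1 j l
  | .sv m', .pv _ m _ => m = m'
  | _, _ => False

/-- The bipartite graph `G` of Construction 1. -/
def GraphG (n : ℕ) : SimpleGraph (Vert n) where
  Adj x y := rel x y ∨ rel y x
  symm := ⟨fun _ _ h => h.symm⟩
  loopless := ⟨by intro x h; cases x <;> simp [rel] at h⟩

/-- The square `G²` of a graph `G`: two distinct vertices are adjacent iff
their distance in `G` is at most 2 (i.e. they are adjacent or have a common neighbor). -/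
def square {V : Type*} (G : SimpleGraph V) : SimpleGraph V where
  Adj x y := x ≠ y ∧ (G.Adj x y ∨ ∃ z, G.Adj x z ∧ G.Adj z y)
  symm := by
    refine ⟨?_⟩
    rintro x y ⟨hxy, h | ⟨z, h1, h2⟩⟩
    · exact ⟨hxy.symm, Or.inl h.symm⟩
    · exact ⟨hxy.symm, Or.inr ⟨z, h2.symm, h1.symm⟩⟩
  loopless := ⟨fun x h => h.1 rfl⟩

/-- `P_k^l = {v_{k,1}^l, …, v_{k,n}^l}`. -/
def Pkl (n : ℕ) (k l : ZMod n) : Set (Vert n) := {x | ∃ m, x = Vert.pv k m l}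

/-- `P^l = P_1^l ∪ ⋯ ∪ P_n^l`. -/
def PlSet (n : ℕ) (l : ZMod n) : Set (Vert n) := {x | ∃ k m, x = Vert.pv k m l}

/-- `P = P^1 ∪ ⋯ ∪ P^n`. -/
def Pset (n : ℕ) : Set (Vert n) := {x | ∃ k m l, x = Vert.pv k m l}

/-- `T_{l,m} = {v_{1,m}^l, …, v_{n,m}^l}`. -/
def Tlm (n : ℕ) (l m : ZMod n) : Set (Vert n) := {x | ∃ k, x = Vert.pv k m l}

/-- `Q_i = {w_{i,1}, …, w_{i,n}}`. -/
def QiSet (n : ℕ) (i : {x : ZMod n // x ≠ 0}) : Set (Vert n) := {x | ∃ j, x = Vert.qv i j}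

/-- `Q = Q_1 ∪ ⋯ ∪ Q_{n-1}`. -/
def Qset (n : ℕ) : Set (Vert n) := {x | ∃ i j, x = Vert.qv i j}

/-- `R_i = {u_{i,1}, …, u_{i,n}}`. -/
def RiSet (n : ℕ) (i : {x : ZMod n // x ≠ 0}) : Set (Vert n) := {x | ∃ j, x = Vert.rv i j}

/-- `R = R_1 ∪ ⋯ ∪ R_{n-1}`. -/
def Rset (n : ℕ) : Set (Vert n) := {x | ∃ i j, x = Vert.rv i j}

/-- `S = {s_1, …, s_n}`. -/
def Sset (n : ℕ) : Set (Vert n) := {x | ∃ m, x = Vert.sv m}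

/-- `G_l`, the subgraph of `G` induced by `P^l ∪ Q` (kept on the same vertex type:
all edges of `G` with both endpoints in `P^l ∪ Q`). -/
def Gl (n : ℕ) (l : ZMod n) : SimpleGraph (Vert n) where
  Adj x y := (GraphG n).Adj x y ∧ x ∈ PlSet n l ∪ Qset n ∧ y ∈ PlSet n l ∪ Qset n
  symm := ⟨fun _ _ ⟨h, hx, hy⟩ => ⟨h.symm, hy, hx⟩⟩
  loopless := ⟨fun x h => (GraphG n).irrefl h.1⟩

/-- `G` is `k`-choosable: for every list assignment with all lists of size at least `k`
there is a proper coloring choosing each color from the corresponding list. -/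
def Choosable {V : Type*} (G : SimpleGraph V) (k : ℕ) : Prop :=
  ∀ L : V → Finset ℕ, (∀ v, k ≤ (L v).card) →
    ∃ φ : V → ℕ, (∀ v, φ v ∈ L v) ∧ ∀ ⦃v w⦄, G.Adj v w → φ v ≠ φ w

/-- The list chromatic number `χ_ℓ(G)`: the least `k` such that `G` is `k`-choosable. -/
noncomputable def listChromaticNumber {V : Type*} (G : SimpleGraph V) : ℕ :=
  sInf {k | Choosable G k}


/-! ### Auxiliary development -/

section Aux

def vertEquiv (n : ℕ) :
    Vert n ≃ ((ZMod n × ZMod n × ZMod n) ⊕ ({x : ZMod n // x ≠ 0} × ZMod n)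
      ⊕ ({x : ZMod n // x ≠ 0} × ZMod n) ⊕ ZMod n) where
  toFun v :=
    match v with
    | .pv k m l => .inl (k, m, l)
    | .qv i j => .inr (.inl (i, j))
    | .rv i j => .inr (.inr (.inl (i, j)))
    | .sv m => .inr (.inr (.inr m))
  invFun x :=
    match x with
    | .inl (k, m, l) => .pv k m l
    | .inr (.inl (i, j)) => .qv i j
    | .inr (.inr (.inl (i, j))) => .rv i j
    | .inr (.inr (.inr m)) => .sv m
  left_inv v := by cases v <;> rfl
  right_inv x := by rcases x with ⟨k, m, l⟩ | ⟨i, j⟩ | ⟨i, j⟩ | m <;> rfl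

noncomputable instance instFintypeVert (n : ℕ) [NeZero n] : Fintype (Vert n) :=
  Fintype.ofEquiv _ (vertEquiv n).symm

/-- Any two vertices in distinct parts `P_k^l`, `P_{k'}^{l'}` are adjacent in `G²`. -/
lemma parts_complete {n : ℕ} (hn : n.Prime) {k l k' l' m m' : ZMod n}
    (hkl : (k, l) ≠ (k', l')) :
    (square (GraphG n)).Adj (Vert.pv k m l) (Vert.pv k' m' l') := by
  haveI := Fact.mk hn
  have hne : Vert.pv k m l ≠ Vert.pv k' m' l' := by
    intro h
    injection h with h1 h2 h3
    exact hkl (by rw [h1, h3])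
  refine ⟨hne, Or.inr ?_⟩
  by_cases hm : m = m'
  · refine ⟨Vert.sv m, Or.inr ?_, Or.inl ?_⟩
    · show m = m; rfl
    · show m' = m; exact hm.symm
  · by_cases hl : l = l'
    · -- same layer, different k
      have hk : k ≠ k' := by
        intro h; exact hkl (by rw [h, hl])
      have hkk : k - k' ≠ 0 := sub_ne_zero.mpr hk
      set i : ZMod n := (m - m') * (k - k')⁻¹ with hi
      have hik : i * (k - k') = m - m' := by
        rw [hi, mul_assoc, inv_mul_cancel₀ hkk, mul_one]
      have hi0 : i ≠ 0 := by
        intro h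
        rw [h, zero_mul] at hik
        exact hm (by linear_combination -hik)
      refine ⟨Vert.qv ⟨i, hi0⟩ (m - i * (k - 1)), Or.inr ?_, Or.inl ?_⟩
      · show m = latinL n i (m - i * (k - 1)) k
        unfold latinL; ring
      · show m' = latinL n i (m - i * (k - 1)) k'
        unfold latinL; linear_combination hik
    · -- different layers; m ≠ m'
      have hll : l - l' ≠ 0 := sub_ne_zero.mpr hl
      set i : ZMod n := (m - m') * (l - l')⁻¹ with hi
      have hik : i * (l - l') = m - m' := by
        rw [hi, mul_assoc, inv_mul_cancel₀ hll, mul_one]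
      have hi0 : i ≠ 0 := by
        intro h
        rw [h, zero_mul] at hik
        exact hm (by linear_combination -hik)
      refine ⟨Vert.rv ⟨i, hi0⟩ (m - i * (l - 1)), Or.inr ?_, Or.inl ?_⟩
      · show m = latinL n i (m - i * (l - 1)) l
        unfold latinL; ring
      · show m' = latinL n i (m - i * (l - 1)) l'
        unfold latinL; linear_combination hik

/-! ### Independent sets in `G²` -/

lemma not_adj_pv {n : ℕ} {k l m m' : ZMod n} :
    ¬ (square (GraphG n)).Adj (Vert.pv k m l) (Vert.pv k m' l) := by
  rintro ⟨hne, hd | ⟨z, hz1, hz2⟩⟩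
  · rcases hd with h | h <;> cases h
  · have hmm : m = m' := by
      cases z with
      | pv a b c => rcases hz1 with h | h <;> cases h
      | qv i j =>
        rcases hz1 with h | h
        · cases h
        · rcases hz2 with h' | h'
          · have e1 : m = latinL n i.1 j k := h
            have e2 : m' = latinL n i.1 j k := h'
            exact e1.trans e2.symm
          · cases h'
      | rv i j =>
        rcases hz1 with h | h
        · cases h
        · rcases hz2 with h' | h'
          · have e1 : m = latinL n i.1 j l := h
            have e2 : m' = latinL n i.1 j l := h'
            exact e1.trans e2.symm
          · cases h'
      | sv m'' =>
        rcases hz1 with h | h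
        · cases h
        · rcases hz2 with h' | h'
          · have e1 : m = m'' := h
            have e2 : m' = m'' := h'
            exact e1.trans e2.symm
          · cases h'
    exact hne (by rw [hmm])

lemma not_adj_qv {n : ℕ} {i : {x : ZMod n // x ≠ 0}} {j j' : ZMod n} :
    ¬ (square (GraphG n)).Adj (Vert.qv i j) (Vert.qv i j') := by
  rintro ⟨hne, hd | ⟨z, hz1, hz2⟩⟩
  · rcases hd with h | h <;> cases h
  · have hjj : j = j' := by
      cases z with
      | pv a b c =>
        rcases hz1 with h | h
        · have e1 : b = latinL n i.1 j a := h
          rcases hz2 with h' | h'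
          · cases h'
          · have e2 : b = latinL n i.1 j' a := h'
            unfold latinL at e1 e2
            linear_combination e2 - e1
        · cases h
      | qv i' j'' => rcases hz1 with h | h <;> cases h
      | rv i' j'' => rcases hz1 with h | h <;> cases h
      | sv m => rcases hz1 with h | h <;> cases h
    exact hne (by rw [hjj])

lemma not_adj_rv {n : ℕ} {i : {x : ZMod n // x ≠ 0}} {j j' : ZMod n} :
    ¬ (square (GraphG n)).Adj (Vert.rv i j) (Vert.rv i j') := by
  rintro ⟨hne, hd | ⟨z, hz1, hz2⟩⟩
  · rcases hd with h | h <;> cases h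
  · have hjj : j = j' := by
      cases z with
      | pv a b c =>
        rcases hz1 with h | h
        · have e1 : b = latinL n i.1 j c := h
          rcases hz2 with h' | h'
          · cases h'
          · have e2 : b = latinL n i.1 j' c := h'
            unfold latinL at e1 e2
            linear_combination e2 - e1
        · cases h
      | qv i' j'' => rcases hz1 with h | h <;> cases h
      | rv i' j'' => rcases hz1 with h | h <;> cases h
      | sv m => rcases hz1 with h | h <;> cases h
    exact hne (by rw [hjj])

lemma not_adj_sv {n : ℕ} {m m' : ZMod n} :
    ¬ (square (GraphG n)).Adj (Vert.sv m) (Vert.sv m') := by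
  rintro ⟨hne, hd | ⟨z, hz1, hz2⟩⟩
  · rcases hd with h | h <;> cases h
  · have hmm : m = m' := by
      cases z with
      | pv a b c =>
        rcases hz1 with h | h
        · have e1 : b = m := h
          rcases hz2 with h' | h'
          · cases h'
          · have e2 : b = m' := h'
            exact e1.symm.trans e2
        · cases h
      | qv i' j'' => rcases hz1 with h | h <;> cases h
      | rv i' j'' => rcases hz1 with h | h <;> cases h
      | sv m'' => rcases hz1 with h | h <;> cases h
    exact hne (by rw [hmm])

end Aux

/-! ### The bad list assignment -/

def Yblk (d v : ℕ) : Finset ℕ :=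
  (Finset.range d).map ⟨fun r => v * d + r, fun a b h => Nat.add_left_cancel h⟩

lemma mem_Yblk {d v c : ℕ} : c ∈ Yblk d v ↔ ∃ r < d, v * d + r = c := by
  simp [Yblk]
  exact Iff.rfl

lemma Yblk_eq_of_mem {d v1 v2 c : ℕ} (h1 : c ∈ Yblk d v1) (h2 : c ∈ Yblk d v2) :
    v1 = v2 := by
  rw [mem_Yblk] at h1 h2
  obtain ⟨r1, hr1, he1⟩ := h1
  obtain ⟨r2, hr2, he2⟩ := h2
  rcases lt_trichotomy v1 v2 with h | h | h
  · have : (v1 + 1) * d ≤ v2 * d := Nat.mul_le_mul_right d (by omega)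
    rw [add_mul, one_mul] at this
    linarith
  · exact h
  · have : (v2 + 1) * d ≤ v1 * d := Nat.mul_le_mul_right d (by omega)
    rw [add_mul, one_mul] at this
    linarith

lemma Yblk_card (d v : ℕ) : (Yblk d v).card = d := by
  simp [Yblk]

/-- The bad list assignment: a vertex `v_{k,m}^l` gets the union of the blocks
`Y_{m'}` over `m' ≠ m`; all other vertices get `range (2(n-1)²)`. -/
def badL (n : ℕ) : Vert n → Finset ℕ
  | .pv _ m _ => ((Finset.range n).erase m.val).biUnion fun v => Yblk (2 * (n - 1)) v
  | _ => Finset.range (2 * (n - 1) ^ 2)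

lemma badL_card {n : ℕ} [NeZero n] (v : Vert n) : 2 * (n - 1) ^ 2 ≤ (badL n v).card := by
  cases v with
  | pv k m l =>
    show 2 * (n - 1) ^ 2 ≤ (((Finset.range n).erase m.val).biUnion
      fun v => Yblk (2 * (n - 1)) v).card
    rw [Finset.card_biUnion]
    · rw [Finset.sum_congr rfl (fun v _ => Yblk_card (2 * (n - 1)) v),
        Finset.sum_const, smul_eq_mul,
        Finset.card_erase_of_mem (Finset.mem_range.mpr (ZMod.val_lt m)),
        Finset.card_range]
      have hn : 1 ≤ n := Nat.one_le_iff_ne_zero.mpr (NeZero.ne n)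
      obtain ⟨a, rfl⟩ : ∃ a, n = a + 1 := ⟨n - 1, by omega⟩
      simp [Nat.add_sub_cancel]
      ring_nf
      omega
    · intro x _ y _ hxy
      rw [Function.onFun, Finset.disjoint_left]
      intro c hc hc'
      exact hxy (Yblk_eq_of_mem hc hc')
  | qv i j => simp [badL]
  | rv i j => simp [badL]
  | sv m => simp [badL]

lemma badL_pv_subset {n : ℕ} [NeZero n] (k m l : ZMod n) :
    badL n (Vert.pv k m l) ⊆ Finset.range (n * (2 * (n - 1))) := by
  intro c hc
  have hc' : ∃ v ∈ (Finset.range n).erase m.val, c ∈ Yblk (2 * (n - 1)) v := by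
    simpa [badL] using hc
  obtain ⟨v, hv, hcv⟩ := hc'
  have hvn : v < n := Finset.mem_range.mp (Finset.mem_of_mem_erase hv)
  rw [mem_Yblk] at hcv
  obtain ⟨r, hr, rfl⟩ := hcv
  have : (v + 1) * (2 * (n - 1)) ≤ n * (2 * (n - 1)) :=
    Nat.mul_le_mul_right _ (by omega)
  rw [add_mul, one_mul] at this
  rw [Finset.mem_range]
  linarith

/-- Key rainbow fact: under the bad lists, the colors within a part are not all equal. -/
lemma part_not_mono {n : ℕ} [NeZero n] (hn3 : 3 ≤ n) (φ : Vert n → ℕ)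
    (hmem : ∀ v, φ v ∈ badL n v) (k l : ZMod n) :
    ∃ m m' : ZMod n, φ (Vert.pv k m l) ≠ φ (Vert.pv k m' l) := by
  by_contra hcon
  push_neg at hcon
  have h0 := hmem (Vert.pv k 0 l)
  have h0' : ∃ v ∈ (Finset.range n).erase (0 : ZMod n).val,
      φ (Vert.pv k 0 l) ∈ Yblk (2 * (n - 1)) v := by
    simpa [badL] using h0
  obtain ⟨v1, hv1, hc1⟩ := h0'
  have hv1' := Finset.mem_of_mem_erase hv1
  have hv1n : v1 < n := Finset.mem_range.mp hv1'
  set m1 : ZMod n := (v1 : ZMod n) with hm1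
  have hval : m1.val = v1 := ZMod.val_cast_of_lt hv1n
  have h1 := hmem (Vert.pv k m1 l)
  have h1' : ∃ v ∈ (Finset.range n).erase m1.val,
      φ (Vert.pv k m1 l) ∈ Yblk (2 * (n - 1)) v := by
    simpa [badL] using h1
  obtain ⟨v2, hv2, hc2⟩ := h1'
  have heq : φ (Vert.pv k m1 l) = φ (Vert.pv k 0 l) := hcon m1 0
  rw [heq] at hc2
  have : v2 = v1 := Yblk_eq_of_mem hc2 hc1
  rw [hval, ← this] at hv2
  exact Finset.notMem_erase v2 _ hv2

/-- The main lower-bound lemma: `G²` is not `2(n-1)²`-choosable. -/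
lemma not_choosable {n : ℕ} (hn : n.Prime) (hn3 : 3 ≤ n) :
    ¬ Choosable (square (GraphG n)) (2 * (n - 1) ^ 2) := by
  haveI : NeZero n := ⟨by omega⟩
  intro hch
  obtain ⟨φ, hmem, hproper⟩ := hch (badL n) badL_card
  set F : ZMod n × ZMod n → Finset ℕ :=
    fun s => Finset.univ.image (fun m => φ (Vert.pv s.1 m s.2)) with hF
  have hdisj : ∀ x ∈ (Finset.univ : Finset (ZMod n × ZMod n)),
      ∀ y ∈ (Finset.univ : Finset (ZMod n × ZMod n)), x ≠ y → Disjoint (F x) (F y) := by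
    intro x _ y _ hxy
    rw [Finset.disjoint_left]
    intro c hc hc'
    simp only [hF, Finset.mem_image, Finset.mem_univ, true_and] at hc hc'
    obtain ⟨m, hm⟩ := hc
    obtain ⟨m', hm'⟩ := hc'
    have hadj : (square (GraphG n)).Adj (Vert.pv x.1 m x.2) (Vert.pv y.1 m' y.2) :=
      parts_complete hn (by simpa using hxy)
    exact hproper hadj (hm.trans hm'.symm)
  have hsub : Finset.univ.biUnion F ⊆ Finset.range (n * (2 * (n - 1))) := by
    intro c hc
    rw [Finset.mem_biUnion] at hc
    obtain ⟨s, _, hcs⟩ := hc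
    simp only [hF, Finset.mem_image, Finset.mem_univ, true_and] at hcs
    obtain ⟨m, hm⟩ := hcs
    exact badL_pv_subset s.1 m s.2 (hm ▸ hmem (Vert.pv s.1 m s.2))
  have hcard2 : ∀ s : ZMod n × ZMod n, 2 ≤ (F s).card := by
    intro s
    obtain ⟨m, m', hmm⟩ := part_not_mono hn3 φ hmem s.1 s.2
    have h1 : φ (Vert.pv s.1 m s.2) ∈ F s := by
      simp only [hF, Finset.mem_image]; exact ⟨m, Finset.mem_univ m, rfl⟩
    have h2 : φ (Vert.pv s.1 m' s.2) ∈ F s := by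
      simp only [hF, Finset.mem_image]; exact ⟨m', Finset.mem_univ m', rfl⟩
    exact Finset.one_lt_card.mpr ⟨_, h1, _, h2, hmm⟩
  have hsum : (Finset.univ.biUnion F).card = ∑ s : ZMod n × ZMod n, (F s).card :=
    Finset.card_biUnion hdisj
  have hge : 2 * (n * n) ≤ ∑ s : ZMod n × ZMod n, (F s).card := by
    calc 2 * (n * n) = ∑ _s : ZMod n × ZMod n, 2 := by
          rw [Finset.sum_const, smul_eq_mul]
          simp [ZMod.card, mul_comm]
      _ ≤ ∑ s : ZMod n × ZMod n, (F s).card := Finset.sum_le_sum fun s _ => hcard2 s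
  have hle : (Finset.univ.biUnion F).card ≤ n * (2 * (n - 1)) := by
    calc (Finset.univ.biUnion F).card ≤ (Finset.range (n * (2 * (n - 1)))).card :=
          Finset.card_le_card hsub
      _ = n * (2 * (n - 1)) := Finset.card_range _
  have : 2 * (n * n) ≤ n * (2 * (n - 1)) := by omega
  have hlt : n * (2 * (n - 1)) < 2 * (n * n) := by
    obtain ⟨a, rfl⟩ : ∃ a, n = a + 1 := ⟨n - 1, by omega⟩
    simp only [Nat.add_sub_cancel]
    nlinarith
  omega

/-- `G²` is `|V|`-choosable (via Hall's theorem). -/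
lemma choosable_card {n : ℕ} [NeZero n] :
    Choosable (square (GraphG n)) (Fintype.card (Vert n)) := by
  intro L hL
  have hall : ∀ s : Finset (Vert n), s.card ≤ (s.biUnion L).card := by
    intro s
    rcases s.eq_empty_or_nonempty with rfl | ⟨x, hx⟩
    · simp
    · calc s.card ≤ Fintype.card (Vert n) := Finset.card_le_univ s
        _ ≤ (L x).card := hL x
        _ ≤ (s.biUnion L).card :=
            Finset.card_le_card (Finset.subset_biUnion_of_mem L hx)
  obtain ⟨f, hfinj, hf⟩ := (Finset.all_card_le_biUnion_card_iff_existsInjective' L).mp hall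
  exact ⟨f, hf, fun v w hadj he => hadj.1 (hfinj he)⟩

lemma choosable_mono {V : Type*} {G : SimpleGraph V} {k k' : ℕ} (hkk : k ≤ k')
    (h : Choosable G k) : Choosable G k' := fun L hL => h L fun v => le_trans hkk (hL v)

lemma listChromaticNumber_ge {n : ℕ} (hn : n.Prime) (hn3 : 3 ≤ n) :
    2 * (n - 1) ^ 2 + 1 ≤ listChromaticNumber (square (GraphG n)) := by
  haveI : NeZero n := ⟨by omega⟩
  have hne : {k | Choosable (square (GraphG n)) k}.Nonempty :=
    ⟨Fintype.card (Vert n), choosable_card⟩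
  have hmem := Nat.sInf_mem hne
  by_contra hcon
  push_neg at hcon
  have hle : sInf {k | Choosable (square (GraphG n)) k} ≤ 2 * (n - 1) ^ 2 := by
    unfold listChromaticNumber at hcon; omega
  exact not_choosable hn hn3 (choosable_mono hle hmem)

/-! ### The chromatic number upper bound -/

def cf (n : ℕ) : Vert n → ℕ
  | .pv k _ l => k.val * n + l.val
  | .qv i _ => n * n + (i.1.val - 1)
  | .rv i _ => n * n + (n - 1) + (i.1.val - 1)
  | .sv _ => n * n + 2 * n - 2

lemma cf_lt {n : ℕ} [NeZero n] (hn3 : 3 ≤ n) (v : Vert n) : cf n v < n * n + 2 * n - 1 := by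
  cases v with
  | pv k m l =>
    have h1 : k.val < n := ZMod.val_lt k
    have h2 : l.val < n := ZMod.val_lt l
    have : k.val * n + l.val < n * n := by
      calc k.val * n + l.val < k.val * n + n := by omega
        _ = (k.val + 1) * n := by ring
        _ ≤ n * n := Nat.mul_le_mul_right n (by omega)
    show k.val * n + l.val < n * n + 2 * n - 1
    omega
  | qv i j =>
    have h1 : i.1.val < n := ZMod.val_lt i.1
    show n * n + (i.1.val - 1) < n * n + 2 * n - 1
    omega
  | rv i j =>
    have h1 : i.1.val < n := ZMod.val_lt i.1
    show n * n + (n - 1) + (i.1.val - 1) < n * n + 2 * n - 1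
    omega
  | sv m =>
    show n * n + 2 * n - 2 < n * n + 2 * n - 1
    omega

lemma grid_lt {n a b : ℕ} (ha : a < n) (hb : b < n) : a * n + b < n * n := by
  have key : (a + 1) * n ≤ n * n := Nat.mul_le_mul_right n ha
  rw [add_mul, one_mul] at key
  linarith

lemma grid_inj {n a b a' b' : ℕ} (ha : a < n) (hb : b < n) (ha' : a' < n) (hb' : b' < n)
    (h : a * n + b = a' * n + b') : a = a' ∧ b = b' := by
  have h1 : a = a' := by
    rcases lt_trichotomy a a' with hlt | he | hgt
    · have key : (a + 1) * n ≤ a' * n := Nat.mul_le_mul_right n hlt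
      rw [add_mul, one_mul] at key; linarith
    · exact he
    · have key : (a' + 1) * n ≤ a * n := Nat.mul_le_mul_right n hgt
      rw [add_mul, one_mul] at key; linarith
  subst h1
  exact ⟨rfl, by omega⟩

lemma cf_valid {n : ℕ} [NeZero n] (hn3 : 3 ≤ n) {x y : Vert n}
    (hadj : (square (GraphG n)).Adj x y) : cf n x ≠ cf n y := by
  intro heq
  have hvi : Function.Injective (ZMod.val : ZMod n → ℕ) := ZMod.val_injective n
  cases x with
  | pv k m l =>
    cases y with
    | pv k' m' l' =>
      have h1 : k.val < n := ZMod.val_lt k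
      have h2 : l.val < n := ZMod.val_lt l
      have h1' : k'.val < n := ZMod.val_lt k'
      have h2' : l'.val < n := ZMod.val_lt l'
      have he : k.val * n + l.val = k'.val * n + l'.val := heq
      have hkv : k.val = k'.val ∧ l.val = l'.val := grid_inj h1 h2 h1' h2' he
      have hk : k = k' := hvi hkv.1
      have hl : l = l' := hvi hkv.2
      subst hk; subst hl
      exact not_adj_pv hadj
    | qv i' j' =>
      have he : k.val * n + l.val = n * n + (i'.1.val - 1) := heq
      have h1 : k.val < n := ZMod.val_lt k
      have h2 : l.val < n := ZMod.val_lt l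
      have := grid_lt h1 h2
      omega
    | rv i' j' =>
      have he : k.val * n + l.val = n * n + (n - 1) + (i'.1.val - 1) := heq
      have h1 : k.val < n := ZMod.val_lt k
      have h2 : l.val < n := ZMod.val_lt l
      have := grid_lt h1 h2
      omega
    | sv m' =>
      have he : k.val * n + l.val = n * n + 2 * n - 2 := heq
      have h1 : k.val < n := ZMod.val_lt k
      have h2 : l.val < n := ZMod.val_lt l
      have := grid_lt h1 h2
      omega
  | qv i j =>
    cases y with
    | pv k' m' l' =>
      have he : n * n + (i.1.val - 1) = k'.val * n + l'.val := heq
      have h1 : k'.val < n := ZMod.val_lt k'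
      have h2 : l'.val < n := ZMod.val_lt l'
      have := grid_lt h1 h2
      omega
    | qv i' j' =>
      have he : n * n + (i.1.val - 1) = n * n + (i'.1.val - 1) := heq
      have hv1 : i.1.val ≠ 0 := fun h => i.2 (hvi (h.trans (ZMod.val_zero).symm))
      have hv2 : i'.1.val ≠ 0 := fun h => i'.2 (hvi (h.trans (ZMod.val_zero).symm))
      have : i.1.val = i'.1.val := by omega
      have hii : i = i' := Subtype.ext (hvi this)
      subst hii
      exact not_adj_qv hadj
    | rv i' j' =>
      have he : n * n + (i.1.val - 1) = n * n + (n - 1) + (i'.1.val - 1) := heq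
      have h1 : i.1.val < n := ZMod.val_lt i.1
      have h1' : i'.1.val < n := ZMod.val_lt i'.1
      have hv2 : i'.1.val ≠ 0 := fun h => i'.2 (hvi (h.trans (ZMod.val_zero).symm))
      omega
    | sv m' =>
      have he : n * n + (i.1.val - 1) = n * n + 2 * n - 2 := heq
      have h1 : i.1.val < n := ZMod.val_lt i.1
      omega
  | rv i j =>
    cases y with
    | pv k' m' l' =>
      have he : n * n + (n - 1) + (i.1.val - 1) = k'.val * n + l'.val := heq
      have h1 : k'.val < n := ZMod.val_lt k'
      have h2 : l'.val < n := ZMod.val_lt l'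
      have := grid_lt h1 h2
      omega
    | qv i' j' =>
      have he : n * n + (n - 1) + (i.1.val - 1) = n * n + (i'.1.val - 1) := heq
      have h1 : i.1.val < n := ZMod.val_lt i.1
      have h1' : i'.1.val < n := ZMod.val_lt i'.1
      have hv1 : i.1.val ≠ 0 := fun h => i.2 (hvi (h.trans (ZMod.val_zero).symm))
      omega
    | rv i' j' =>
      have he : n * n + (n - 1) + (i.1.val - 1) = n * n + (n - 1) + (i'.1.val - 1) := heq
      have hv1 : i.1.val ≠ 0 := fun h => i.2 (hvi (h.trans (ZMod.val_zero).symm))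
      have hv2 : i'.1.val ≠ 0 := fun h => i'.2 (hvi (h.trans (ZMod.val_zero).symm))
      have : i.1.val = i'.1.val := by omega
      have hii : i = i' := Subtype.ext (hvi this)
      subst hii
      exact not_adj_rv hadj
    | sv m' =>
      have he : n * n + (n - 1) + (i.1.val - 1) = n * n + 2 * n - 2 := heq
      have h1 : i.1.val < n := ZMod.val_lt i.1
      omega
  | sv m =>
    cases y with
    | pv k' m' l' =>
      have he : n * n + 2 * n - 2 = k'.val * n + l'.val := heq
      have h1 : k'.val < n := ZMod.val_lt k'
      have h2 : l'.val < n := ZMod.val_lt l'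
      have := grid_lt h1 h2
      omega
    | qv i' j' =>
      have he : n * n + 2 * n - 2 = n * n + (i'.1.val - 1) := heq
      have h1 : i'.1.val < n := ZMod.val_lt i'.1
      omega
    | rv i' j' =>
      have he : n * n + 2 * n - 2 = n * n + (n - 1) + (i'.1.val - 1) := heq
      have h1 : i'.1.val < n := ZMod.val_lt i'.1
      omega
    | sv m' =>
      exact not_adj_sv hadj

lemma chrom_le {n : ℕ} (hn : n.Prime) (hn3 : 3 ≤ n) :
    (square (GraphG n)).chromaticNumber.toNat ≤ n * n + 2 * n - 1 := by
  haveI : NeZero n := ⟨by omega⟩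
  have hcol : (square (GraphG n)).Colorable (n * n + 2 * n - 1) :=
    ⟨SimpleGraph.Coloring.mk (fun v => (⟨cf n v, cf_lt hn3 v⟩ : Fin (n * n + 2 * n - 1)))
      (fun {v w} hadj h => cf_valid hn3 hadj (by simpa [Fin.ext_iff] using h))⟩
  have := hcol.chromaticNumber_le
  calc (square (GraphG n)).chromaticNumber.toNat
      ≤ ((n * n + 2 * n - 1 : ℕ) : ℕ∞).toNat :=
        ENat.toNat_le_toNat this (ENat.coe_ne_top _)
    _ = n * n + 2 * n - 1 := ENat.toNat_coe _

/-- `χ_ℓ(G²) - χ(G²) > n² - 6n + 3` (as integers). -/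
theorem stmt_17 (n : ℕ) (hn : n.Prime) (hn3 : 3 ≤ n) :
    (n : ℤ) ^ 2 - 6 * (n : ℤ) + 3 <
      (listChromaticNumber (square (GraphG n)) : ℤ) -
        ((square (GraphG n)).chromaticNumber.toNat : ℤ) := by
  have h1 := listChromaticNumber_ge hn hn3
  have h2 := chrom_le hn hn3
  have h1' : (2 * (n - 1) ^ 2 + 1 : ℤ) ≤ (listChromaticNumber (square (GraphG n)) : ℤ) := by
    calc (2 * (n - 1) ^ 2 + 1 : ℤ) = ((2 * (n - 1) ^ 2 + 1 : ℕ) : ℤ) := by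
          push_cast [Nat.cast_sub (by omega : 1 ≤ n)]
          ring
      _ ≤ _ := by exact_mod_cast h1
  have h2' : ((square (GraphG n)).chromaticNumber.toNat : ℤ) ≤ (n : ℤ) * n + 2 * n - 1 := by
    calc ((square (GraphG n)).chromaticNumber.toNat : ℤ) ≤ ((n * n + 2 * n - 1 : ℕ) : ℤ) := by
          exact_mod_cast h2
      _ = (n : ℤ) * n + 2 * n - 1 := by
          push_cast [Nat.cast_sub (by nlinarith : 1 ≤ n * n + 2 * n)]
          ring
  nlinarith [h1', h2']
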